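/- Let p be a prime number, k a field of characteristic p, and G a finite commutative group whose cardinality is a power of p. Then the group algebra k[G] is a local ring. -/

import Mathlib

/-- If `k` is a field of characteristic `p` and `G` is a finite commutative group of
`p`-power order, then the group algebra `k[G]` is a local ring. -/
theorem stmt_7 (p : ℕ) [Fact p.Prime] (k : Type*) [Field k] [CharP k p]
    (G : Type*) [CommGroup G] [Fintype G] (h : ∃ n : ℕ, Fintype.card G = p ^ n) :
    IsLocalRing (MonoidAlgebra k G) := by
  obtain ⟨n, hn⟩ := h
  haveI : CharP (MonoidAlgebra k G) p :=
    charP_of_injective_algebraMap (algebraMap k (MonoidAlgebra k G)).injective p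
  set ε : MonoidAlgebra k G →ₐ[k] k := MonoidAlgebra.lift k k G 1 with hε
  have hgen : ∀ g : G, IsNilpotent (MonoidAlgebra.single g (1 : k) - 1) := by
    intro g
    refine ⟨p ^ n, ?_⟩
    rw [sub_pow_char_pow, one_pow, MonoidAlgebra.single_pow, one_pow, ← hn, pow_card_eq_one]
    simp [MonoidAlgebra.one_def]
  have key : ∀ x : MonoidAlgebra k G, ε x = 0 → IsNilpotent x := by
    intro x hx
    have hεx : ∑ g : G, x.coeff g = 0 := by
      have : ε x = ∑ g : G, x.coeff g := by
        rw [← MonoidAlgebra.sum_coeff_single x]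
        rw [map_finsuppSum]
        rw [Finsupp.sum_fintype]
        · simp [hε, MonoidAlgebra.lift_single]
        · intro g; simp [hε, MonoidAlgebra.lift_single]
      rw [← this, hx]
    have hdecomp : x = ∑ g : G, x.coeff g • (MonoidAlgebra.single g (1 : k) - 1) := by
      have h1 : ∀ g : G, x.coeff g • (MonoidAlgebra.single g (1 : k) - 1)
          = MonoidAlgebra.single g (x.coeff g) - x.coeff g • 1 := by
        intro g
        rw [smul_sub, MonoidAlgebra.smul_single', mul_one]
      simp_rw [h1]
      rw [Finset.sum_sub_distrib, ← Finset.sum_smul, hεx, zero_smul, sub_zero]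
      conv_lhs => rw [← MonoidAlgebra.sum_coeff_single x]
      rw [Finsupp.sum_fintype]
      intro g; simp
    rw [← mem_nilradical, hdecomp]
    refine Ideal.sum_mem _ (fun g _ => ?_)
    rw [Algebra.smul_def]
    exact Ideal.mul_mem_left _ _ ((mem_nilradical).2 (hgen g))
  have unit_of : ∀ a : MonoidAlgebra k G, ε a ≠ 0 → IsUnit a := by
    intro a ha
    have hu : IsUnit (algebraMap k (MonoidAlgebra k G) (ε a)) :=
      (IsUnit.mk0 _ ha).map _
    have hnil : IsNilpotent (a - algebraMap k (MonoidAlgebra k G) (ε a)) := by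
      apply key
      simp [hε, MonoidAlgebra.lift_single, MonoidAlgebra.coe_algebraMap]
    have := hnil.isUnit_add_right_of_commute hu (Commute.all _ _)
    simpa using this
  apply IsLocalRing.of_isUnit_or_isUnit_one_sub_self
  intro a
  by_cases ha : ε a = 0
  · right
    apply unit_of
    rw [map_sub, map_one, ha, sub_zero]
    exact one_ne_zero
  · exact Or.inl (unit_of a ha)
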